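/- Let 0 < ε < 2/3 and set c(ε) = (2π²ε)^{−2/3}. The maximal solution (α, β) of the system (case aμ = 1) with initial conditions α(0) = √(c(ε))·ε and β(0) = √(c(ε)), defined on [0, t_max) with t_max ∈ (0, ∞], satisfies α(t) → 0 and β(t) → ∞ as t → t_max. (This is the ODE content of Theorem 2 in the case aμ = 1 with ε < 2/3: starting too far from the round metric, the normalized flow does not return to it.) -/

import Mathlib

open Real Filter Set Topology
open scoped ENNReal

/-- The vector field of the volume-normalized spinor-flow system on Berger spheres
in the case `aμ = 1`. -/
noncomputable def G1 (x y : ℝ) : ℝ × ℝ :=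
  (-(1/4) * x^3 / y^4 + (5/12) * x^2 / y^3 - (1/6) * x / y^2,
   (1/8) * x^2 / y^3 - (5/24) * x / y^2 + (1/12) * (1/y))
/-- `(α, β)` is a solution of the normalized system (case `aμ = 1`) on `J`. -/
def IsSolutionOn (α β : ℝ → ℝ) (J : Set ℝ) : Prop :=
  ∀ t ∈ J, β t ≠ 0 ∧
    HasDerivAt α (G1 (α t) (β t)).1 t ∧
    HasDerivAt β (G1 (α t) (β t)).2 t

/-- The interval `[0, T)` as a subset of `ℝ`, where `T ∈ (0,∞]`. -/
def domainUpTo (T : ℝ≥0∞) : Set ℝ := {t : ℝ | 0 ≤ t ∧ ENNReal.ofReal t < T}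

/-- `(α, β)` is a maximal solution on `[0, T)`: it is a solution there and cannot be
extended to a solution on a strictly larger interval to the right. -/
def IsMaxSolution (α β : ℝ → ℝ) (T : ℝ≥0∞) : Prop :=
  0 < T ∧ IsSolutionOn α β (domainUpTo T) ∧
    ¬ ∃ (T' : ℝ≥0∞) (α' β' : ℝ → ℝ), T < T' ∧ IsSolutionOn α' β' (domainUpTo T') ∧
        ∀ t ∈ domainUpTo T, α' t = α t ∧ β' t = β t

/-- The filter of approach to the right endpoint of `[0, T)`: `atTop` if `T = ∞`,
and the left-neighborhood filter of `T` otherwise. -/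
noncomputable def endFilter (T : ℝ≥0∞) : Filter ℝ :=
  if T = ⊤ then atTop else 𝓝[<] T.toReal

/-! ### Auxiliary lemmas -/

lemma G1_fst (x y : ℝ) :
    (G1 x y).1 = -(1/4) * x^3 / y^4 + (5/12) * x^2 / y^3 - (1/6) * x / y^2 := rfl
lemma G1_snd (x y : ℝ) :
    (G1 x y).2 = (1/8) * x^2 / y^3 - (5/24) * x / y^2 + (1/12) * (1/y) := rfl

lemma conserv_alg (x y : ℝ) (hy : y ≠ 0) :
    (G1 x y).1 * y^2 + x * (2 * y * (G1 x y).2) = 0 := by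
  rw [G1_fst, G1_snd]; field_simp; ring

lemma cuberoot_exists {w : ℝ} (hw : 0 < w) : ∃ v : ℝ, 0 < v ∧ v^3 = w := by
  refine ⟨w ^ ((1:ℝ)/3), Real.rpow_pos_of_pos hw _, ?_⟩
  rw [← Real.rpow_natCast (w ^ ((1:ℝ)/3)) 3, ← Real.rpow_mul hw.le]
  norm_num

lemma Dpos {C b : ℝ} (hC : 0 < C) (hb3 : 3*C/2 < b^3) (hb : 0 < b) :
    0 < (b^3 - C) * (2*b^3 - 3*C) / (24 * b^7) :=
  div_pos (mul_pos (by linarith) (by linarith)) (by positivity)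

lemma linear_lower {f g : ℝ → ℝ} {t c : ℝ} (ht : 0 ≤ t)
    (hf : ∀ s ∈ Icc 0 t, HasDerivAt f (g s) s) (hc : ∀ s ∈ Icc 0 t, c ≤ g s) :
    f 0 + c * t ≤ f t := by
  have hh : ∀ s ∈ Icc 0 t, HasDerivAt (fun s => f s - c * s) (g s - c) s := by
    intro s hs
    have h2 : HasDerivAt (fun s : ℝ => c * s) c s := by
      simpa using (hasDerivAt_id s).const_mul c
    exact (hf s hs).sub h2
  have hmono : MonotoneOn (fun s => f s - c * s) (Icc 0 t) := by
    apply monotoneOn_of_hasDerivWithinAt_nonneg (convex_Icc 0 t)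
      (fun s hs => (hh s hs).continuousAt.continuousWithinAt)
      (f' := fun s => g s - c)
    · intro x hx
      rw [interior_Icc] at hx
      exact ((hh x (Ioo_subset_Icc_self hx)).hasDerivWithinAt).mono interior_subset
    · intro x hx
      rw [interior_Icc] at hx
      have := hc x (Ioo_subset_Icc_self hx)
      linarith
  have := hmono (left_mem_Icc.mpr ht) (right_mem_Icc.mpr ht) ht
  simp only [mul_zero, sub_zero, mul_comm] at this
  linarith

lemma linear_upper {f g : ℝ → ℝ} {t c : ℝ} (ht : 0 ≤ t)
    (hf : ∀ s ∈ Icc 0 t, HasDerivAt f (g s) s) (hc : ∀ s ∈ Icc 0 t, g s ≤ c) :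
    f t ≤ f 0 + c * t := by
  have := linear_lower (f := fun s => -f s) (g := fun s => -g s) (c := -c) ht
    (fun s hs => (hf s hs).neg) (fun s hs => by simpa using hc s hs)
  simp at this
  linarith

theorem pl_exists_solution {E : Type*} [NormedAddCommGroup E] [NormedSpace ℝ E]
    [CompleteSpace E] {v : ℝ → E → E} {tmin tmax : ℝ} {t₀ : Icc tmin tmax} {x₀ : E}
    {a L K : NNReal} (hf : IsPicardLindelof v t₀ x₀ a 0 L K) :
    ∃ f : ℝ → E, f t₀ = x₀ ∧ ∀ t ∈ Icc tmin tmax,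
      f t ∈ Metric.closedBall x₀ (a : ℝ) ∧
        HasDerivWithinAt f (v t (f t)) (Icc tmin tmax) t := by
  have hx : x₀ ∈ Metric.closedBall x₀ ((0 : NNReal) : ℝ) := Metric.mem_closedBall_self le_rfl
  obtain ⟨α, hα⟩ := ODE.FunSpace.exists_isFixedPt_next hf hx
  refine ⟨α.compProj, by rw [ODE.FunSpace.compProj_val, ← hα,
    ODE.FunSpace.next_apply₀], fun t ht ↦ ⟨α.compProj_mem_closedBall hf.mul_max_le, ?_⟩⟩
  apply ODE.hasDerivWithinAt_picard_Icc t₀.2 hf.continuousOn_uncurry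
    α.continuous_compProj.continuousOn (fun _ ht' ↦ α.compProj_mem_closedBall hf.mul_max_le)
    x₀ ht |>.congr_of_mem _ ht
  intro t' ht'
  nth_rw 1 [← hα]
  rw [ODE.FunSpace.compProj_of_mem ht', ODE.FunSpace.next_apply]

lemma contDiffAt_G {p : ℝ × ℝ} (hp : p.2 ≠ 0) :
    ContDiffAt ℝ 1 (fun q : ℝ × ℝ => G1 q.1 q.2) p := by
  have hx : ContDiffAt ℝ 1 (fun q : ℝ × ℝ => q.1) p := contDiffAt_fst
  have hy : ContDiffAt ℝ 1 (fun q : ℝ × ℝ => q.2) p := contDiffAt_snd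
  have hc : ∀ c : ℝ, ContDiffAt ℝ 1 (fun _ : ℝ × ℝ => c) p := fun c => contDiffAt_const
  unfold G1
  exact ContDiffAt.prodMk
    ((((hc _).mul (hx.pow 3)).div (hy.pow 4) (pow_ne_zero 4 hp)).add
      (((hc _).mul (hx.pow 2)).div (hy.pow 3) (pow_ne_zero 3 hp)) |>.sub
      (((hc _).mul hx).div (hy.pow 2) (pow_ne_zero 2 hp)))
    ((((hc _).mul (hx.pow 2)).div (hy.pow 3) (pow_ne_zero 3 hp)).sub
      (((hc _).mul hx).div (hy.pow 2) (pow_ne_zero 2 hp)) |>.add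
      ((hc _).mul ((hc _).div hy hp)))

section sol

variable {α β : ℝ → ℝ} {J : Set ℝ}
  (hJ : ∀ t ∈ J, Icc 0 t ⊆ J) (hge : ∀ t ∈ J, (0:ℝ) ≤ t)
  (hsol : IsSolutionOn α β J)

include hJ hge hsol in
lemma betaPos (hβ0 : 0 < β 0) : ∀ t ∈ J, 0 < β t := by
  intro t ht
  rcases lt_or_ge 0 (β t) with h | h
  · exact h
  have hcont : ContinuousOn β (Icc 0 t) := fun s hs =>
    ((hsol s (hJ t ht hs)).2.2.continuousAt).continuousWithinAt
  have h0t : (0:ℝ) ≤ t := hge t ht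
  have : (0:ℝ) ∈ Icc (β t) (β 0) := ⟨h, hβ0.le⟩
  obtain ⟨c, hc, hc0⟩ := intermediate_value_Icc' h0t hcont this
  exact absurd hc0 (hsol c (hJ t ht hc)).1

include hJ hge hsol in
lemma conservation : ∀ t ∈ J, α t * (β t)^2 = α 0 * (β 0)^2 := by
  intro t ht
  have hsub := hJ t ht
  have h0t : (0:ℝ) ≤ t := hge t ht
  have hcont : ContinuousOn (fun s => α s * (β s)^2) (Icc 0 t) := fun s hs => by
    have h := hsol s (hsub hs)
    exact ((h.2.1.continuousAt.mul (h.2.2.continuousAt.pow 2)).continuousWithinAt)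
  have hderiv : ∀ s ∈ Ico 0 t, HasDerivWithinAt (fun s => α s * (β s)^2) 0 (Ici s) s := by
    intro s hs
    obtain ⟨hb, ha', hb'⟩ := hsol s (hsub (Ico_subset_Icc_self hs))
    have h1 : HasDerivAt (fun s => α s * (β s)^2)
        ((G1 (α s) (β s)).1 * (β s)^2 + α s * (2 * β s ^ 1 * (G1 (α s) (β s)).2)) s :=
      ha'.mul (hb'.pow 2)
    have h2 : (G1 (α s) (β s)).1 * (β s)^2 + α s * (2 * β s ^ 1 * (G1 (α s) (β s)).2) = 0 := by
      have := conserv_alg (α s) (β s) hb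
      rw [pow_one]; linarith [this]
    rw [h2] at h1
    exact h1.hasDerivWithinAt
  exact constant_of_has_deriv_right_zero hcont hderiv t ⟨h0t, le_rfl⟩

include hsol in
/-- On the invariant manifold, `β` satisfies the scalar ODE. -/
lemma beta_deriv (hcons : ∀ t ∈ J, α t * (β t)^2 = α 0 * (β 0)^2) :
    ∀ t ∈ J, HasDerivAt β
      (((β t)^3 - α 0 * (β 0)^2) * (2*(β t)^3 - 3*(α 0 * (β 0)^2)) / (24 * (β t)^7)) t := by
  intro t ht
  obtain ⟨hb, _, hb'⟩ := hsol t ht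
  convert hb' using 1
  have hα : α t = (α 0 * (β 0)^2) / (β t)^2 := by
    field_simp
    linarith [hcons t ht]
  rw [G1_snd, hα]
  field_simp
  ring

include hJ hge hsol in
/-- Barrier: `β` never drops below its initial value. -/
lemma beta_lower {b0 εv : ℝ} (hb0 : 0 < b0) (hεv0 : 0 < εv) (hεv1 : εv < 2/3)
    (hα0 : α 0 = b0 * εv) (hβ0 : β 0 = b0) : ∀ t ∈ J, b0 ≤ β t := by
  have hcons := conservation hJ hge hsol
  have hderiv := beta_deriv hsol hcons
  set C : ℝ := α 0 * (β 0)^2 with hCdef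
  have hCval : C = εv * b0^3 := by rw [hCdef, hα0, hβ0]; ring
  have hCpos : 0 < C := by rw [hCval]; positivity
  have hkey : 3*C/2 < b0^3 := by rw [hCval]; nlinarith
  obtain ⟨w, hw0, hw3⟩ := cuberoot_exists (show (0:ℝ) < (3*C/2 + b0^3)/2 by positivity)
  have hw3gt : 3*C/2 < w^3 := by rw [hw3]; linarith
  have hw3lt : w^3 < b0^3 := by rw [hw3]; linarith
  have hwlt : w < b0 := by
    by_contra h
    exact absurd (pow_le_pow_left₀ hb0.le (not_lt.mp h) 3) (not_le.mpr hw3lt)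
  by_contra hcon
  push_neg at hcon
  obtain ⟨t₂, ht₂J, ht₂⟩ := hcon
  set w' : ℝ := max w (β t₂) with hw'def
  have hw'w : w ≤ w' := le_max_left _ _
  have hw'lt : w' < b0 := max_lt hwlt ht₂
  have hw'pos : 0 < w' := lt_of_lt_of_le hw0 hw'w
  have hw'3 : 3*C/2 < w'^3 := lt_of_lt_of_le hw3gt (pow_le_pow_left₀ hw0.le hw'w 3)
  set K : Set ℝ := {s | s ∈ Icc 0 t₂ ∧ β s ≤ w'} with hKdef
  have ht₂K : t₂ ∈ K := ⟨⟨hge t₂ ht₂J, le_rfl⟩, le_max_right _ _⟩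
  have hKne : K.Nonempty := ⟨t₂, ht₂K⟩
  have hKbdd : BddBelow K := ⟨0, fun s hs => hs.1.1⟩
  set t₁ : ℝ := sInf K with ht₁def
  have ht₁0 : 0 ≤ t₁ := le_csInf hKne (fun s hs => hs.1.1)
  have ht₁t₂ : t₁ ≤ t₂ := csInf_le hKbdd ht₂K
  have ht₁J : t₁ ∈ J := hJ t₂ ht₂J ⟨ht₁0, ht₁t₂⟩
  have hβt₁ : β t₁ ≤ w' := by
    by_contra h
    push_neg at h
    have hct : ContinuousAt β t₁ := (hsol t₁ ht₁J).2.2.continuousAt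
    have hev : {s : ℝ | w' < β s} ∈ 𝓝 t₁ := hct (lt_mem_nhds h)
    obtain ⟨δ, hδ0, hδ⟩ := Metric.mem_nhds_iff.mp hev
    obtain ⟨k, hkK, hk⟩ := Real.lt_sInf_add_pos hKne hδ0
    have : k ∈ Metric.ball t₁ δ := by
      rw [Metric.mem_ball, Real.dist_eq, abs_lt]
      constructor <;> [linarith [csInf_le hKbdd hkK]; linarith]
    exact absurd hkK.2 (not_le.mpr (hδ this))
  have ht₁pos : 0 < t₁ := by
    rcases eq_or_lt_of_le ht₁0 with h | h
    · exfalso; rw [← h] at hβt₁; rw [hβ0] at hβt₁; linarith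
    · exact h
  have hlt : ∀ s, 0 ≤ s → s < t₁ → w' < β s := by
    intro s hs0 hst₁
    by_contra h
    push_neg at h
    exact absurd (csInf_le hKbdd ⟨⟨hs0, le_trans hst₁.le ht₁t₂⟩, h⟩) (not_le.mpr hst₁)
  have hmono : StrictMonoOn β (Icc 0 t₁) := by
    apply strictMonoOn_of_deriv_pos (convex_Icc 0 t₁)
    · exact fun s hs => ((hsol s (hJ t₁ ht₁J hs)).2.2.continuousAt).continuousWithinAt
    · intro x hx
      rw [interior_Icc] at hx
      have hxJ : x ∈ J := hJ t₁ ht₁J ⟨hx.1.le, hx.2.le⟩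
      rw [(hderiv x hxJ).deriv]
      have hβx : w' < β x := hlt x hx.1.le hx.2
      have hβx3 : w'^3 < (β x)^3 := by
        apply pow_lt_pow_left₀ hβx hw'pos.le
        norm_num
      exact Dpos hCpos (lt_trans hw'3 hβx3) (lt_trans hw'pos hβx)
  have hfin := hmono ⟨le_rfl, ht₁0⟩ ⟨ht₁0, le_rfl⟩ ht₁pos
  rw [hβ0] at hfin
  linarith

include hJ hge hsol in
/-- `β` is monotone on `J`. -/
lemma beta_mono {b0 εv : ℝ} (hb0 : 0 < b0) (hεv0 : 0 < εv) (hεv1 : εv < 2/3)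
    (hα0 : α 0 = b0 * εv) (hβ0 : β 0 = b0) :
    ∀ s ∈ J, ∀ t ∈ J, s ≤ t → β s ≤ β t := by
  have hcons := conservation hJ hge hsol
  have hderiv := beta_deriv hsol hcons
  have hlow := beta_lower hJ hge hsol hb0 hεv0 hεv1 hα0 hβ0
  set C : ℝ := α 0 * (β 0)^2 with hCdef
  have hCval : C = εv * b0^3 := by rw [hCdef, hα0, hβ0]; ring
  have hCpos : 0 < C := by rw [hCval]; positivity
  have hkey : 3*C/2 < b0^3 := by rw [hCval]; nlinarith
  intro s hs t ht hst
  have hsub : Icc s t ⊆ J := fun x hx => hJ t ht ⟨le_trans (hge s hs) hx.1, hx.2⟩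
  have hmono : MonotoneOn β (Icc s t) := by
    apply monotoneOn_of_hasDerivWithinAt_nonneg (convex_Icc s t)
      (fun x hx => ((hsol x (hsub hx)).2.2.continuousAt).continuousWithinAt)
      (f' := fun x => ((β x)^3 - C) * (2*(β x)^3 - 3*C) / (24 * (β x)^7))
    · intro x hx
      rw [interior_Icc] at hx
      exact ((hderiv x (hsub (Ioo_subset_Icc_self hx))).hasDerivWithinAt).mono interior_subset
    · intro x hx
      rw [interior_Icc] at hx
      have hxJ := hsub (Ioo_subset_Icc_self hx)
      have hbx : b0 ≤ β x := hlow x hxJ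
      have hb3 : b0^3 ≤ (β x)^3 := pow_le_pow_left₀ hb0.le hbx 3
      exact (Dpos hCpos (lt_of_lt_of_le hkey hb3) (lt_of_lt_of_le hb0 hbx)).le
  exact hmono (left_mem_Icc.mpr hst) (right_mem_Icc.mpr hst) hst

end sol

/-- Upper bound on the scalar vector field. -/
lemma D_le {C b b0 εv : ℝ} (hb0 : 0 < b0) (hC : C = εv * b0^3) (hε0 : 0 < εv)
    (hε1 : εv < 2/3) (hb : b0 ≤ b) :
    (b^3 - C) * (2*b^3 - 3*C) / (24 * b^7) ≤ 1/(12*b0) := by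
  have hbpos : 0 < b := lt_of_lt_of_le hb0 hb
  have hb3 : b0^3 ≤ b^3 := pow_le_pow_left₀ hb0.le hb 3
  have hCpos : 0 < C := by rw [hC]; positivity
  have h3C : 3*C ≤ 5*b^3 := by nlinarith
  have h1 : (b^3 - C) * (2*b^3 - 3*C) ≤ 2*b^6 := by
    nlinarith [mul_le_mul_of_nonneg_left h3C hCpos.le]
  have h2 : (b^3 - C) * (2*b^3 - 3*C) / (24 * b^7) ≤ 2*b^6 / (24*b^7) := by
    apply div_le_div_of_nonneg_right h1 (by positivity) |>.trans_eq rfl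
  have h3 : 2*b^6 / (24*b^7) = 1/(12*b) := by
    field_simp; ring
  rw [h3] at h2
  refine h2.trans ?_
  apply one_div_le_one_div_of_le (by positivity)
  nlinarith

/-- Lower bound on the scalar vector field when `b0 ≤ b ≤ B`. -/
lemma D_ge {C b b0 εv B : ℝ} (hb0 : 0 < b0) (hC : C = εv * b0^3) (hε0 : 0 < εv)
    (hε1 : εv < 2/3) (hb : b0 ≤ b) (hB : b ≤ B) :
    (b0^3 - C) * (2*b0^3 - 3*C) / (24 * B^7) ≤ (b^3 - C) * (2*b^3 - 3*C) / (24 * b^7) := by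
  have hbpos : 0 < b := lt_of_lt_of_le hb0 hb
  have hBpos : 0 < B := lt_of_lt_of_le hbpos hB
  have hb3 : b0^3 ≤ b^3 := pow_le_pow_left₀ hb0.le hb 3
  have hCpos : 0 < C := by rw [hC]; positivity
  have hkey : 3*C/2 < b0^3 := by rw [hC]; nlinarith
  have hnum0 : 0 ≤ (b0^3 - C) * (2*b0^3 - 3*C) := by nlinarith
  have hnum : (b0^3 - C) * (2*b0^3 - 3*C) ≤ (b^3 - C) * (2*b^3 - 3*C) := by nlinarith
  have h7 : b^7 ≤ B^7 := pow_le_pow_left₀ hbpos.le hB 7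
  exact div_le_div₀ (hnum0.trans hnum) hnum (by positivity) (by linarith)

lemma prod_dist_components {p q : ℝ × ℝ} {d : ℝ} (h : dist p q ≤ d) :
    dist p.1 q.1 ≤ d ∧ dist p.2 q.2 ≤ d := by
  rw [Prod.dist_eq, max_le_iff] at h
  exact h

lemma prod_dist_le {p q : ℝ × ℝ} {d : ℝ} (h1 : dist p.1 q.1 ≤ d) (h2 : dist p.2 q.2 ≤ d) :
    dist p q ≤ d := by
  rw [Prod.dist_eq]
  exact max_le h1 h2

/-- Instability (case `aμ = 1`, `0 < ε < 2/3`): the maximal solution starting at the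
volume-normalized Berger metric, `α(0) = √(c(ε))·ε`, `β(0) = √(c(ε))` with
`c(ε) = (2π²ε)^(-2/3)`, satisfies `α(t) → 0` and `β(t) → ∞` as `t → t_max`. -/
theorem instability_amu_one (ε : ℝ) (hε0 : 0 < ε) (hε1 : ε < 2/3)
    (α β : ℝ → ℝ) (T : ℝ≥0∞)
    (hmax : IsMaxSolution α β T)
    (hα0 : α 0 = Real.sqrt ((2 * π^2 * ε) ^ (-(2:ℝ)/3)) * ε)
    (hβ0 : β 0 = Real.sqrt ((2 * π^2 * ε) ^ (-(2:ℝ)/3))) :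
    Tendsto α (endFilter T) (𝓝 0) ∧ Tendsto β (endFilter T) atTop := by
  obtain ⟨hT0, hsol, hnext⟩ := hmax
  set b0 : ℝ := Real.sqrt ((2 * π^2 * ε) ^ (-(2:ℝ)/3)) with hb0def
  have hb0 : 0 < b0 := Real.sqrt_pos.mpr (Real.rpow_pos_of_pos (by positivity) _)
  set J : Set ℝ := domainUpTo T with hJdef
  have hJ : ∀ t ∈ J, Icc 0 t ⊆ J := fun t ht s hs =>
    ⟨hs.1, lt_of_le_of_lt (ENNReal.ofReal_le_ofReal hs.2) ht.2⟩
  have hge : ∀ t ∈ J, (0:ℝ) ≤ t := fun t ht => ht.1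
  have h0J : (0:ℝ) ∈ J := ⟨le_rfl, by simpa using hT0⟩
  have hα0' : α 0 = b0 * ε := by rw [hα0]
  have hβ0' : β 0 = b0 := hβ0
  have hcons := conservation hJ hge hsol
  have hderiv := beta_deriv hsol hcons
  have hlow := beta_lower hJ hge hsol hb0 hε0 hε1 hα0' hβ0'
  have hmono := beta_mono hJ hge hsol hb0 hε0 hε1 hα0' hβ0'
  set C : ℝ := α 0 * (β 0)^2 with hCdef
  have hCval : C = ε * b0^3 := by rw [hCdef, hα0', hβ0']; ring
  have hCpos : 0 < C := by rw [hCval]; positivity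
  have hβpos : ∀ t ∈ J, 0 < β t := fun t ht => lt_of_lt_of_le hb0 (hlow t ht)
  have halpha : ∀ t ∈ J, α t = C / (β t)^2 := by
    intro t ht
    have h := hcons t ht
    have hb := (hβpos t ht).ne'
    field_simp
    linarith
  by_cases hTtop : T = ⊤
  · -- global existence: β → ∞ and α → 0 along atTop
    have hJall : ∀ t : ℝ, 0 ≤ t → t ∈ J := by
      intro t ht
      exact ⟨ht, by rw [hTtop]; exact ENNReal.ofReal_lt_top⟩
    have hEF : endFilter T = atTop := by rw [endFilter, if_pos hTtop]
    -- β is unbounded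
    have hunbdd : ∀ M : ℝ, ∃ t, 0 ≤ t ∧ M < β t := by
      intro M
      by_contra hcon
      push_neg at hcon
      obtain ⟨B, hBb0, hβB⟩ : ∃ B, b0 ≤ B ∧ ∀ t, 0 ≤ t → β t ≤ B :=
        ⟨max M b0, le_max_right _ _, fun t ht => le_trans (hcon t ht) (le_max_left _ _)⟩
      have hBpos : 0 < B := lt_of_lt_of_le hb0 hBb0
      obtain ⟨δ, hδdef⟩ : ∃ δ : ℝ, δ = (b0^3 - C) * (2*b0^3 - 3*C) / (24 * B^7) := ⟨_, rfl⟩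
      have hkey : 3*C/2 < b0^3 := by rw [hCval]; nlinarith
      have hδpos : 0 < δ := by
        rw [hδdef]
        exact div_pos (mul_pos (by linarith) (by linarith)) (by positivity)
      obtain ⟨t₃, ht₃def⟩ : ∃ t₃ : ℝ, t₃ = (B - b0)/δ + 1 := ⟨_, rfl⟩
      have ht₃pos : 0 < t₃ := by
        have h9 : 0 ≤ (B - b0)/δ := div_nonneg (by linarith) hδpos.le
        rw [ht₃def]; linarith
      have hlb := linear_lower (f := β)
        (g := fun s => ((β s)^3 - C) * (2*(β s)^3 - 3*C) / (24 * (β s)^7)) ht₃pos.le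
        (fun s hs => hderiv s (hJall s hs.1)) (c := δ)
        (fun s hs => hδdef ▸ D_ge hb0 hCval hε0 hε1 (hlow s (hJall s hs.1)) (hβB s hs.1))
      rw [hβ0'] at hlb
      have : B < β t₃ := by
        have hδt : δ * t₃ = (B - b0) + δ := by
          rw [ht₃def, mul_add, mul_one, mul_div_cancel₀ _ hδpos.ne']
        rw [hδt] at hlb
        linarith
      exact absurd (hβB t₃ ht₃pos.le) (not_le.mpr this)
    have hβtop : Tendsto β atTop atTop := by
      rw [tendsto_atTop]
      intro M
      obtain ⟨t₀, ht₀, hMt₀⟩ := hunbdd M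
      rw [eventually_atTop]
      exact ⟨t₀, fun t ht => le_trans hMt₀.le
        (hmono t₀ (hJall t₀ ht₀) t (hJall t (le_trans ht₀ ht)) ht)⟩
    have hβsqtop : Tendsto (fun t => (β t)^2) atTop atTop :=
      (tendsto_pow_atTop (two_ne_zero)).comp hβtop
    have hα2 : Tendsto (fun t => C / (β t)^2) atTop (𝓝 0) :=
      Tendsto.div_atTop tendsto_const_nhds hβsqtop
    have hαtop : Tendsto α atTop (𝓝 0) := by
      apply hα2.congr'
      rw [EventuallyEq, eventually_atTop]
      exact ⟨0, fun t ht => (halpha t (hJall t ht)).symm⟩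
    rw [hEF]
    exact ⟨hαtop, hβtop⟩
  · -- finite-time case: contradiction with maximality
    exfalso
    obtain ⟨τ, hτdef⟩ : ∃ τ : ℝ, τ = T.toReal := ⟨_, rfl⟩
    have hτpos : 0 < τ := hτdef ▸ ENNReal.toReal_pos hT0.ne' hTtop
    have hJeq : J = Ico 0 τ := by
      ext t
      simp only [hJdef, domainUpTo, mem_setOf_eq, mem_Ico]
      constructor
      · rintro ⟨h1, h2⟩
        exact ⟨h1, hτdef ▸ (ENNReal.ofReal_lt_iff_lt_toReal h1 hTtop).mp h2⟩
      · rintro ⟨h1, h2⟩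
        exact ⟨h1, (ENNReal.ofReal_lt_iff_lt_toReal h1 hTtop).mpr (hτdef ▸ h2)⟩
    obtain ⟨B, hBdef⟩ : ∃ B : ℝ, B = b0 + 1/(12*b0) * τ := ⟨_, rfl⟩
    have hβB : ∀ t ∈ J, β t ≤ B := by
      intro t ht
      have ht' : t ∈ Ico 0 τ := hJeq ▸ ht
      have hub := linear_upper (f := β)
        (g := fun s => ((β s)^3 - C) * (2*(β s)^3 - 3*C) / (24 * (β s)^7)) ht'.1
        (fun s hs => hderiv s (hJ t ht hs)) (c := 1/(12*b0))
        (fun s hs => D_le hb0 hCval hε0 hε1 (hlow s (hJ t ht hs)))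
      rw [hβ0'] at hub
      have h12 : (0:ℝ) ≤ 1/(12*b0) := by positivity
      have := mul_le_mul_of_nonneg_left ht'.2.le h12
      rw [hBdef]
      linarith
    -- limit of β at τ from the left
    obtain ⟨βm, hβmdef⟩ : ∃ βm : ℝ → ℝ, βm = fun t => β (max t 0) := ⟨_, rfl⟩
    have hmaxJ : ∀ t, t < τ → max t 0 ∈ J := fun t ht =>
      hJeq ▸ ⟨le_max_right _ _, max_lt ht hτpos⟩
    have hβmmono : MonotoneOn βm (Iio τ) := by
      intro a ha b hb hab
      rw [hβmdef]
      exact hmono _ (hmaxJ a ha) _ (hmaxJ b hb) (max_le_max hab le_rfl)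
    have hbdd : BddAbove (βm '' Iio τ) := by
      refine ⟨B, ?_⟩
      rintro x ⟨t, ht, rfl⟩
      rw [hβmdef]
      exact hβB _ (hmaxJ t ht)
    obtain ⟨L, hLdef⟩ : ∃ L : ℝ, L = sSup (βm '' Iio τ) := ⟨_, rfl⟩
    have hβmlim : Tendsto βm (𝓝[<] τ) (𝓝 L) := hLdef ▸ hβmmono.tendsto_nhdsLT hbdd
    have hEvIoo : Ioo 0 τ ∈ 𝓝[<] τ := Ioo_mem_nhdsLT hτpos
    have hβlim : Tendsto β (𝓝[<] τ) (𝓝 L) := by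
      apply hβmlim.congr'
      filter_upwards [hEvIoo] with t ht
      rw [hβmdef]
      simp [max_eq_left ht.1.le]
    have hL_lb : b0 ≤ L := by
      rw [hLdef]
      refine le_csSup hbdd ⟨0, hτpos, ?_⟩
      rw [hβmdef]
      simp [hβ0']
    have hLpos : 0 < L := lt_of_lt_of_le hb0 hL_lb
    have hβleL : ∀ t ∈ J, β t ≤ L := by
      intro t ht
      rw [hLdef]
      refine le_csSup hbdd ⟨t, (hJeq ▸ ht).2, ?_⟩
      rw [hβmdef]
      simp only []
      rw [max_eq_left (hJeq ▸ ht).1]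
    have hJev : ∀ᶠ t in 𝓝[<] τ, t ∈ J := by
      filter_upwards [hEvIoo] with t ht
      exact hJeq ▸ ⟨ht.1.le, ht.2⟩
    have hαlim : Tendsto α (𝓝[<] τ) (𝓝 (C / L^2)) := by
      have h1 : Tendsto (fun t => C / (β t)^2) (𝓝[<] τ) (𝓝 (C / L^2)) :=
        tendsto_const_nhds.div (hβlim.pow 2) (pow_ne_zero 2 hLpos.ne')
      apply h1.congr'
      filter_upwards [hJev] with t ht
      exact (halpha t ht).symm
    have hpairlim : Tendsto (fun t => (α t, β t)) (𝓝[<] τ) (𝓝 (C/L^2, L)) :=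
      hαlim.prodMk_nhds hβlim
    obtain ⟨pL, hpLdef⟩ : ∃ p : ℝ × ℝ, p = (C/L^2, L) := ⟨_, rfl⟩
    have hpL2 : pL.2 = L := by rw [hpLdef]
    have hG : ContDiffAt ℝ 1 (fun q : ℝ × ℝ => G1 q.1 q.2) pL :=
      contDiffAt_G (by rw [hpL2]; exact hLpos.ne')
    obtain ⟨Lip, sV, hsV, hlip⟩ := hG.exists_lipschitzOnWith
    obtain ⟨r₁, hr₁, hball₁⟩ := Metric.mem_nhds_iff.mp hsV
    obtain ⟨r₂, hr₂, hball₂⟩ := Metric.continuousAt_iff.mp hG.continuousAt 1 one_pos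
    obtain ⟨r, hrdef⟩ : ∃ r : ℝ, r = min (min r₁ r₂) L / 2 := ⟨_, rfl⟩
    have hrpos : 0 < r := by
      rw [hrdef]
      exact div_pos (lt_min (lt_min hr₁ hr₂) hLpos) two_pos
    have hrr₁ : r < r₁ := by
      rw [hrdef]
      have h1 : min (min r₁ r₂) L ≤ r₁ := le_trans (min_le_left _ _) (min_le_left _ _)
      linarith
    have hrr₂ : r < r₂ := by
      rw [hrdef]
      have h1 : min (min r₁ r₂) L ≤ r₂ := le_trans (min_le_left _ _) (min_le_right _ _)
      linarith
    have hrL : 2*r ≤ L := by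
      rw [hrdef]
      have h1 : min (min r₁ r₂) L ≤ L := min_le_right _ _
      linarith
    obtain ⟨M, hMdef⟩ : ∃ M : ℝ, M = ‖G1 pL.1 pL.2‖ + 1 := ⟨_, rfl⟩
    have hMpos : 0 < M := by rw [hMdef]; positivity
    have hMb : ∀ x ∈ Metric.closedBall pL r, ‖G1 x.1 x.2‖ ≤ M := by
      intro x hx
      have hd : dist x pL < r₂ := lt_of_le_of_lt (Metric.mem_closedBall.mp hx) hrr₂
      have h2 : dist (G1 x.1 x.2) (G1 pL.1 pL.2) < 1 := hball₂ hd
      have h3 : ‖G1 x.1 x.2‖ - ‖G1 pL.1 pL.2‖ ≤ dist (G1 x.1 x.2) (G1 pL.1 pL.2) := by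
        rw [dist_eq_norm]
        exact norm_sub_norm_le _ _
      rw [hMdef]
      linarith
    obtain ⟨δ, hδdef⟩ : ∃ δ : ℝ, δ = r/(2*M) := ⟨_, rfl⟩
    have hδpos : 0 < δ := by rw [hδdef]; positivity
    -- choose the restart time t₁
    have hEv1 : ∀ᶠ t in 𝓝[<] τ, (α t, β t) ∈ Metric.closedBall pL (r/2) := by
      apply hpairlim
      rw [hpLdef]
      exact Metric.closedBall_mem_nhds _ (half_pos hrpos)
    have hEv2 : ∀ᶠ t in 𝓝[<] τ, t ∈ Ioo (max (τ - δ/2) (τ/2)) τ :=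
      eventually_of_mem (Ioo_mem_nhdsLT (max_lt (by linarith) (by linarith))) (fun _ h => h)
    obtain ⟨t₁, hdist1, ht₁mem⟩ := (hEv1.and hEv2).exists
    have ht₁τ : t₁ < τ := ht₁mem.2
    have ht₁half : τ/2 < t₁ := lt_of_le_of_lt (le_max_right _ _) ht₁mem.1
    have ht₁0 : 0 < t₁ := by linarith
    have hτlt : τ < t₁ + δ := by
      have := lt_of_le_of_lt (le_max_left _ _) ht₁mem.1
      linarith
    have ht₁J : t₁ ∈ J := hJeq ▸ ⟨ht₁0.le, ht₁τ⟩
    -- the Picard–Lindelöf data at (α t₁, β t₁)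
    have hballsub : Metric.closedBall (α t₁, β t₁) (r/2) ⊆ Metric.closedBall pL r := by
      intro y hy
      rw [Metric.mem_closedBall] at *
      calc dist y pL ≤ dist y (α t₁, β t₁) + dist (α t₁, β t₁) pL := dist_triangle _ _ _
        _ ≤ r/2 + r/2 := add_le_add hy (Metric.mem_closedBall.mp hdist1)
        _ = r := by ring
    have hballsV : Metric.closedBall pL r ⊆ sV := by
      intro y hy
      exact hball₁ (lt_of_le_of_lt (Metric.mem_closedBall.mp hy) hrr₁)
    have hPL : IsPicardLindelof (fun (_ : ℝ) (q : ℝ × ℝ) => G1 q.1 q.2) (tmin := t₁)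
        (tmax := t₁+δ) ⟨t₁, le_rfl, by linarith⟩
        (α t₁, β t₁) ⟨r/2, by positivity⟩ 0 ⟨M, hMpos.le⟩ Lip := by
      refine ⟨?_, ?_, ?_, ?_⟩
      · exact fun t _ => hlip.mono (hballsub.trans hballsV)
      · exact fun x _ => continuousOn_const
      · exact fun t _ x hx => hMb x (hballsub hx)
      · have h1 : max ((t₁+δ) - t₁) (t₁ - t₁) = δ := by
          rw [add_sub_cancel_left, sub_self, max_eq_left hδpos.le]
        show M * max ((t₁+δ) - t₁) (t₁ - t₁) ≤ r/2 - ((0 : NNReal) : ℝ)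
        rw [h1, hδdef, NNReal.coe_zero, sub_zero]
        rw [show M * (r / (2*M)) = r/2 by field_simp]
    obtain ⟨f, hf0, hfprop⟩ := pl_exists_solution hPL
    have hf1 : f t₁ = (α t₁, β t₁) := hf0
    have hp1 : pL.1 = C/L^2 := by rw [hpLdef]
    obtain ⟨hd1, hd2⟩ := prod_dist_components (Metric.mem_closedBall.mp hdist1)
    -- the old trajectory stays in the r/2-ball around pL on [t₁, τ)
    have hold : ∀ t ∈ Ico t₁ τ, dist ((α t, β t)) pL ≤ r/2 := by
      intro t ht
      have htJ : t ∈ J := hJeq ▸ ⟨le_trans ht₁0.le ht.1, ht.2⟩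
      have hβm : β t₁ ≤ β t := hmono t₁ ht₁J t htJ ht.1
      have hβL : β t ≤ L := hβleL t htJ
      have hβ₁L : β t₁ ≤ L := hβleL t₁ ht₁J
      have hβpos₁ : 0 < β t₁ := hβpos t₁ ht₁J
      have hβpost : 0 < β t := hβpos t htJ
      apply prod_dist_le
      · show dist (α t) pL.1 ≤ r/2
        rw [hp1] at hd1 ⊢
        have hαle : α t ≤ α t₁ := by
          rw [halpha t htJ, halpha t₁ ht₁J]
          gcongr
        have hαge : C/L^2 ≤ α t := by
          rw [halpha t htJ]
          gcongr
        rw [Real.dist_eq, abs_of_nonneg (by linarith)]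
        rw [Real.dist_eq] at hd1
        have := le_abs_self (α t₁ - C/L^2)
        linarith
      · show dist (β t) pL.2 ≤ r/2
        rw [hpL2] at hd2 ⊢
        rw [Real.dist_eq, abs_of_nonpos (by linarith)]
        rw [Real.dist_eq] at hd2
        have := neg_abs_le (β t₁ - L)
        linarith
    -- uniqueness: the new solution agrees with the old one on [t₁, τ)
    have hfball : ∀ u ∈ Icc t₁ (t₁+δ), f u ∈ Metric.closedBall pL r := fun u hu =>
      hballsub (hfprop u hu).1
    have hEqOn : ∀ t ∈ Ico t₁ τ, (α t, β t) = f t := by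
      intro t ht
      have htsub : Icc t₁ t ⊆ J := fun u hu =>
        hJeq ▸ ⟨le_trans ht₁0.le hu.1, lt_of_le_of_lt hu.2 ht.2⟩
      have htsub' : Icc t₁ t ⊆ Icc t₁ (t₁+δ) := fun u hu =>
        ⟨hu.1, le_trans hu.2 (by linarith [ht.2])⟩
      have h1 : EqOn (fun u => (α u, β u)) f (Icc t₁ t) := by
        apply ODE_solution_unique_of_mem_Icc_right
          (v := fun (_ : ℝ) (q : ℝ × ℝ) => G1 q.1 q.2)
          (s := fun _ => Metric.closedBall pL r) (K := Lip)
          (fun _ _ => hlip.mono hballsV)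
        · intro u hu
          have h := hsol u (htsub hu)
          exact (h.2.1.continuousAt.prodMk h.2.2.continuousAt).continuousWithinAt
        · intro u hu
          have h := hsol u (htsub (Ico_subset_Icc_self hu))
          exact (h.2.1.prodMk h.2.2).hasDerivWithinAt
        · intro u hu
          exact Metric.mem_closedBall.mpr
            (le_trans (hold u ⟨hu.1, lt_of_lt_of_le hu.2 ht.2.le⟩) (by linarith))
        · exact fun u hu => ((hfprop u (htsub' hu)).2.continuousWithinAt).mono htsub'
        · intro u hu
          apply (hfprop u (htsub' (Ico_subset_Icc_self hu))).2.mono_of_mem_nhdsWithin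
          rw [mem_nhdsWithin]
          refine ⟨Iio (t₁+δ), isOpen_Iio, ?_, ?_⟩
          · exact lt_of_lt_of_le hu.2 (by linarith [ht.2])
          · rintro x ⟨hx1, hx2⟩
            exact ⟨le_trans hu.1 hx2, (le_of_lt hx1)⟩
        · exact fun u hu => hfball u (htsub' (Ico_subset_Icc_self hu))
        · exact hf1.symm
      exact h1 (right_mem_Icc.mpr ht.1)
    -- build the extension beyond τ and contradict maximality
    obtain ⟨τ', hτ'def⟩ : ∃ x : ℝ, x = (τ + (t₁ + δ))/2 := ⟨_, rfl⟩
    have hττ' : τ < τ' := by rw [hτ'def]; linarith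
    have hτ'lt : τ' < t₁ + δ := by rw [hτ'def]; linarith
    have hτ'pos : 0 < τ' := by linarith
    obtain ⟨αe, hαedef⟩ : ∃ g : ℝ → ℝ, g = fun u => if u < t₁ then α u else (f u).1 := ⟨_, rfl⟩
    obtain ⟨βe, hβedef⟩ : ∃ g : ℝ → ℝ, g = fun u => if u < t₁ then β u else (f u).2 := ⟨_, rfl⟩
    have hαbase : ∀ u, αe u = if u < t₁ then α u else (f u).1 := fun u => by rw [hαedef]
    have hβbase : ∀ u, βe u = if u < t₁ then β u else (f u).2 := fun u => by rw [hβedef]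
    have hαe_lt : ∀ u, u < τ → αe u = α u := by
      intro u hu
      rw [hαbase u]
      by_cases h : u < t₁
      · rw [if_pos h]
      · rw [if_neg h, ← hEqOn u ⟨not_lt.mp h, hu⟩]
    have hβe_lt : ∀ u, u < τ → βe u = β u := by
      intro u hu
      rw [hβbase u]
      by_cases h : u < t₁
      · rw [if_pos h]
      · rw [if_neg h, ← hEqOn u ⟨not_lt.mp h, hu⟩]
    have hαe_ge : ∀ u, t₁ ≤ u → αe u = (f u).1 := fun u hu => by
      rw [hαbase u]; exact if_neg (not_lt.mpr hu)
    have hβe_ge : ∀ u, t₁ ≤ u → βe u = (f u).2 := fun u hu => by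
      rw [hβbase u]; exact if_neg (not_lt.mpr hu)
    have hdom' : domainUpTo (ENNReal.ofReal τ') = Ico 0 τ' := by
      ext t
      simp only [domainUpTo, mem_setOf_eq, mem_Ico]
      constructor
      · rintro ⟨h1, h2⟩
        exact ⟨h1, by rwa [ENNReal.ofReal_lt_ofReal_iff hτ'pos] at h2⟩
      · rintro ⟨h1, h2⟩
        exact ⟨h1, (ENNReal.ofReal_lt_ofReal_iff hτ'pos).mpr h2⟩
    have hfsnd_pos : ∀ u ∈ Icc t₁ (t₁+δ), 0 < (f u).2 := by
      intro u hu
      have h := (prod_dist_components (Metric.mem_closedBall.mp (hfball u hu))).2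
      rw [hpL2, Real.dist_eq] at h
      have h2 := (abs_le.mp h).1
      linarith
    apply hnext
    refine ⟨ENNReal.ofReal τ', αe, βe, ?_, ?_, ?_⟩
    · have hTeq : T = ENNReal.ofReal τ := by rw [hτdef, ENNReal.ofReal_toReal hTtop]
      rw [hTeq]
      exact (ENNReal.ofReal_lt_ofReal_iff hτ'pos).mpr hττ'
    · rw [show domainUpTo (ENNReal.ofReal τ') = Ico 0 τ' from hdom']
      intro t ht
      rcases lt_or_ge t τ with hc | hc
      · have htJ : t ∈ J := hJeq ▸ ⟨ht.1, hc⟩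
        have hev : ∀ᶠ u in 𝓝 t, αe u = α u := by
          filter_upwards [Iio_mem_nhds hc] with u hu
          exact hαe_lt u hu
        have hev2 : ∀ᶠ u in 𝓝 t, βe u = β u := by
          filter_upwards [Iio_mem_nhds hc] with u hu
          exact hβe_lt u hu
        have hva : αe t = α t := hαe_lt t hc
        have hvb : βe t = β t := hβe_lt t hc
        obtain ⟨hne, hda, hdb⟩ := hsol t htJ
        refine ⟨by rw [hvb]; exact hne, ?_, ?_⟩
        · rw [hva, hvb]
          exact hda.congr_of_eventuallyEq hev
        · rw [hva, hvb]
          exact hdb.congr_of_eventuallyEq hev2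
      · have h21 : t₁ < t := lt_of_lt_of_le ht₁τ hc
        have h22 : t < t₁ + δ := lt_trans ht.2 hτ'lt
        have htIcc : t ∈ Icc t₁ (t₁+δ) := ⟨h21.le, h22.le⟩
        have hfd : HasDerivAt f (G1 (f t).1 (f t).2) t :=
          (hfprop t htIcc).2.hasDerivAt (Icc_mem_nhds h21 h22)
        have hev : ∀ᶠ u in 𝓝 t, αe u = (f u).1 := by
          filter_upwards [Ioi_mem_nhds h21] with u hu
          exact hαe_ge u (le_of_lt hu)
        have hev2 : ∀ᶠ u in 𝓝 t, βe u = (f u).2 := by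
          filter_upwards [Ioi_mem_nhds h21] with u hu
          exact hβe_ge u (le_of_lt hu)
        have hva : αe t = (f t).1 := hαe_ge t h21.le
        have hvb : βe t = (f t).2 := hβe_ge t h21.le
        have hfd1 : HasDerivAt (fun u => (f u).1) (G1 (f t).1 (f t).2).1 t :=
          (ContinuousLinearMap.fst ℝ ℝ ℝ).hasFDerivAt.comp_hasDerivAt t hfd
        have hfd2 : HasDerivAt (fun u => (f u).2) (G1 (f t).1 (f t).2).2 t :=
          (ContinuousLinearMap.snd ℝ ℝ ℝ).hasFDerivAt.comp_hasDerivAt t hfd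
        refine ⟨?_, ?_, ?_⟩
        · rw [hvb]
          exact (hfsnd_pos t htIcc).ne'
        · rw [hva, hvb]
          exact hfd1.congr_of_eventuallyEq hev
        · rw [hva, hvb]
          exact hfd2.congr_of_eventuallyEq hev2
    · intro t ht
      have h : t ∈ Ico 0 τ := hJeq ▸ ht
      exact ⟨hαe_lt t h.2, hβe_lt t h.2⟩
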